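/- (Gabrièlov–Khovanskii tangency bound, qualitative form) For every pair of natural numbers n ≥ 1 and d there exists μ = μ(n,d) ∈ ℕ with the following property. Let v be a polynomial vector field on ℝⁿ of degree ≤ d with v(0) ≠ 0, let P ∈ ℝ[y_1,…,y_n] be a squarefree polynomial of degree ≤ d with P(0) = 0, and let γ : (−ε,ε) → ℝⁿ be a solution of ẋ = v(x) with γ(0) = 0. If the function t ↦ P(γ(t)) is not identically zero near t = 0 (i.e. the intersection of the trajectory with the hypersurface {P = 0} at the origin is isolated), then its order of vanishing at t = 0 is at most μ(n,d); that is, some derivative of P∘γ of order ≤ μ(n,d) is nonzero at t = 0. -/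

import Mathlib

open MvPolynomial Set Filter Topology


noncomputable def lieD {n : ℕ} {R : Type*} [CommRing R] (v : Fin n → MvPolynomial (Fin n) R)
    (Q : MvPolynomial (Fin n) R) : MvPolynomial (Fin n) R :=
  ∑ i, v i * pderiv i Q

lemma lieD_add {n : ℕ} {R : Type*} [CommRing R] (v : Fin n → MvPolynomial (Fin n) R)
    (Q₁ Q₂) : lieD v (Q₁ + Q₂) = lieD v Q₁ + lieD v Q₂ := by
  simp [lieD, mul_add, Finset.sum_add_distrib]

lemma lieD_C {n : ℕ} {R : Type*} [CommRing R] (v : Fin n → MvPolynomial (Fin n) R)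
    (a : R) : lieD v (C a) = 0 := by simp [lieD]

lemma lieD_mul_X {n : ℕ} {R : Type*} [CommRing R] (v : Fin n → MvPolynomial (Fin n) R)
    (Q) (i : Fin n) : lieD v (Q * X i) = lieD v Q * X i + Q * v i := by
  simp only [lieD, pderiv_mul, mul_add, Finset.sum_add_distrib, pderiv_X, Finset.sum_mul]
  congr 1
  · exact Finset.sum_congr rfl fun j _ => (mul_assoc _ _ _).symm
  · simp [Pi.single_apply, mul_ite, mul_comm, mul_left_comm]

lemma lieD_map {n : ℕ} {R S : Type*} [CommRing R] [CommRing S] (f : R →+* S)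
    (v : Fin n → MvPolynomial (Fin n) R) (Q) :
    map f (lieD v Q) = lieD (fun i => map f (v i)) (map f Q) := by
  simp [lieD, pderiv_map]

lemma hasDerivAt_eval_comp {n : ℕ} (v : Fin n → MvPolynomial (Fin n) ℝ)
    (γ : ℝ → Fin n → ℝ) {t : ℝ}
    (hγ : HasDerivAt γ (fun i => eval (γ t) (v i)) t) (Q : MvPolynomial (Fin n) ℝ) :
    HasDerivAt (fun s => eval (γ s) Q) (eval (γ t) (lieD v Q)) t := by
  induction Q using MvPolynomial.induction_on with
  | C a => simpa [lieD_C] using hasDerivAt_const t (algebraMap ℝ ℝ a)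
  | add Q₁ Q₂ h₁ h₂ => rw [lieD_add, map_add]; simp only [map_add]; exact h₁.add h₂
  | mul_X Q i h =>
    have hx : HasDerivAt (fun s => γ s i) (eval (γ t) (v i)) t := hasDerivAt_pi.1 hγ i
    have key := h.mul hx
    have hfun : (fun s => eval (γ s) (Q * X i)) = fun y => eval (γ y) Q * γ y i := by
      funext s; simp
    rw [lieD_mul_X, map_add, map_mul, map_mul, eval_X, hfun]
    exact key

lemma iteratedDeriv_eval_comp {n : ℕ} (v : Fin n → MvPolynomial (Fin n) ℝ)
    (γ : ℝ → Fin n → ℝ) {ε : ℝ} (hε : 0 < ε)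
    (hγ' : ∀ t ∈ Set.Ioo (-ε) ε, HasDerivAt γ (fun i => eval (γ t) (v i)) t)
    (Q : MvPolynomial (Fin n) ℝ) (j : ℕ) :
    iteratedDeriv j (fun t => eval (γ t) Q) 0 = eval (γ 0) ((lieD v)^[j] Q) := by
  have hmem : Set.Ioo (-ε) ε ∈ 𝓝 (0:ℝ) := Ioo_mem_nhds (by linarith) hε
  have key : ∀ j, iteratedDeriv j (fun t => eval (γ t) Q)
      =ᶠ[𝓝 (0:ℝ)] fun t => eval (γ t) ((lieD v)^[j] Q) := by
    intro j
    induction j with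
    | zero => simp [iteratedDeriv_zero]
    | succ j ih =>
      rw [iteratedDeriv_succ]
      refine ih.deriv.trans ?_
      filter_upwards [hmem] with t ht
      rw [Function.iterate_succ_apply']
      exact (hasDerivAt_eval_comp v γ (hγ' t ht) _).deriv
  exact (key j).eq_of_nhds

lemma eventually_zero_of_lie_vanish {n : ℕ} (v : Fin n → MvPolynomial (Fin n) ℝ)
    (P : MvPolynomial (Fin n) ℝ) {ε : ℝ} (hε : 0 < ε)
    (γ : ℝ → Fin n → ℝ) (hγ0 : γ 0 = 0)
    (hγ' : ∀ t ∈ Set.Ioo (-ε) ε, HasDerivAt γ (fun i => eval (γ t) (v i)) t)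
    (hvan : ∀ j, eval (0 : Fin n → ℝ) ((lieD v)^[j] P) = 0) :
    ∀ᶠ t in 𝓝 (0:ℝ), eval (γ t) P = 0 := by
  classical
  set g : ℕ → MvPolynomial (Fin n) ℝ := fun j => (lieD v)^[j] P with hg
  -- Noetherian stabilization in ℝ[y]
  have hmono : Monotone fun j => Ideal.span (g '' Set.Iic j) := by
    intro a b hab
    exact Ideal.span_mono (Set.image_mono (Set.Iic_subset_Iic.2 hab))
  obtain ⟨m, hm⟩ := monotone_stabilizes_iff_noetherian.mpr inferInstance
    ⟨fun j => Ideal.span (g '' Set.Iic j), hmono⟩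
  -- coefficients
  have hspan : ∀ j : Fin (m+1), ∃ c : Fin (m+1) → MvPolynomial (Fin n) ℝ,
      ∑ k, c k * g k = g (j.1+1) := by
    intro j
    have h1 : g (j.1+1) ∈ Ideal.span (g '' Set.Iic m) := by
      rcases lt_or_eq_of_le (Nat.lt_succ_iff.mp j.2) with h | h
      · exact Ideal.subset_span ⟨j.1+1, by simpa using h, rfl⟩
      · have := hm (m+1) (Nat.le_succ m)
        simp only [OrderHom.coe_mk] at this
        rw [this]
        exact Ideal.subset_span ⟨j.1+1, by simp [h], rfl⟩
    have h2 : g '' Set.Iic m = Set.range fun k : Fin (m+1) => g k := by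
      ext q
      constructor
      · rintro ⟨i, hi, rfl⟩; exact ⟨⟨i, Nat.lt_succ_of_le hi⟩, rfl⟩
      · rintro ⟨k, rfl⟩; exact ⟨k.1, Nat.lt_succ_iff.mp k.2, rfl⟩
    rw [h2] at h1
    obtain ⟨c, hc⟩ := Ideal.mem_span_range_iff_exists_fun.1 h1
    exact ⟨c, by simpa [smul_eq_mul] using hc⟩
  choose c hc using hspan
  -- set up the linear ODE
  set δ := ε/2 with hδdef
  have hδ0 : 0 < δ := by positivity
  have hIccIoo : Set.Icc (-δ) δ ⊆ Set.Ioo (-ε) ε := fun t ht =>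
    ⟨by simp only [hδdef] at ht ⊢; cases ht; linarith, by simp only [hδdef] at ht ⊢; cases ht; linarith⟩
  set clamp : ℝ → ℝ := fun t => max (-δ) (min δ t) with hclampdef
  have hclamp_mem : ∀ t, clamp t ∈ Set.Icc (-δ) δ := by
    intro t
    exact ⟨le_max_left _ _, max_le (by linarith) (min_le_left _ _)⟩
  have hclamp_id : ∀ t ∈ Set.Icc (-δ) δ, clamp t = t := by
    intro t ht
    simp only [hclampdef]
    rw [min_eq_right ht.2, max_eq_right ht.1]
  have hclamp_cont : Continuous clamp :=
    continuous_const.max (continuous_const.min continuous_id)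
  have hγcont : ContinuousOn γ (Set.Icc (-δ) δ) := fun t ht =>
    ((hγ' t (hIccIoo ht)).continuousAt).continuousWithinAt
  set Γ : ℝ → Fin n → ℝ := fun t => γ (clamp t) with hΓdef
  have hΓcont : Continuous Γ := hγcont.comp_continuous hclamp_cont hclamp_mem
  -- bound on the matrix entries
  set H : ℝ → (Fin (m+1) × Fin (m+1) → ℝ) := fun t p => eval (Γ t) (c p.1 p.2) with hHdef
  have hHcont : Continuous H :=
    continuous_pi fun p => (MvPolynomial.continuous_eval (c p.1 p.2)).comp hΓcont
  obtain ⟨C₀, hC₀⟩ := (isCompact_Icc (a := -δ) (b := δ)).exists_bound_of_continuousOn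
    hHcont.continuousOn
  set C : ℝ := max C₀ 0 with hCdef
  have hCbound : ∀ t (p : Fin (m+1) × Fin (m+1)), |H t p| ≤ C := by
    intro t p
    have h1 : H t = H (clamp t) := by
      simp only [hHdef, hΓdef]
      have : clamp (clamp t) = clamp t := hclamp_id _ (hclamp_mem t)
      rw [this]
    rw [h1]
    calc |H (clamp t) p| ≤ ‖H (clamp t)‖ := by simpa [Real.norm_eq_abs] using norm_le_pi_norm (H (clamp t)) p
      _ ≤ C₀ := hC₀ _ (hclamp_mem t)
      _ ≤ C := le_max_left _ _
  have hC0 : (0:ℝ) ≤ C := le_max_right _ _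
  set F : ℝ → (Fin (m+1) → ℝ) → (Fin (m+1) → ℝ) :=
    fun t x k => ∑ l, H t (k, l) * x l with hFdef
  set K : NNReal := ⟨(m+1) * C, by positivity⟩ with hKdef
  have hlip : ∀ t, LipschitzWith K (F t) := by
    intro t
    apply LipschitzWith.of_dist_le_mul
    intro x y
    rw [dist_eq_norm, dist_eq_norm]
    have h0 : (0:ℝ) ≤ (K:ℝ) * ‖x - y‖ := by positivity
    refine (pi_norm_le_iff_of_nonneg h0).2 fun k => ?_
    have hsub : (F t x - F t y) k = ∑ l, H t (k,l) * (x l - y l) := by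
      simp [hFdef, mul_sub, Finset.sum_sub_distrib]
    rw [hsub]
    calc ‖∑ l, H t (k,l) * (x l - y l)‖ ≤ ∑ l, ‖H t (k,l) * (x l - y l)‖ :=
          norm_sum_le _ _
      _ ≤ ∑ _l : Fin (m+1), C * ‖x - y‖ := by
          refine Finset.sum_le_sum fun l _ => ?_
          rw [norm_mul]
          have h1 : ‖H t (k,l)‖ ≤ C := by
            rw [Real.norm_eq_abs]; exact hCbound t (k,l)
          have h2 : ‖x l - y l‖ ≤ ‖x - y‖ := by
            simpa using norm_le_pi_norm (x - y) l
          exact mul_le_mul h1 h2 (norm_nonneg _) hC0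
      _ = (K:ℝ) * ‖x - y‖ := by
          simp [hKdef, Finset.sum_const, Finset.card_univ]
          change _ = ((m:ℝ) + 1) * C * ‖x - y‖
          ring
  set u : ℝ → Fin (m+1) → ℝ := fun t k => eval (γ t) (g k.1) with hudef
  have hu' : ∀ t ∈ Set.Ioo (-δ) δ, HasDerivAt u (F t (u t)) t := by
    intro t ht
    have htI : t ∈ Set.Icc (-δ) δ := Set.Ioo_subset_Icc_self ht
    have htε : t ∈ Set.Ioo (-ε) ε := hIccIoo htI
    apply hasDerivAt_pi.2
    intro k
    have h1 := hasDerivAt_eval_comp v γ (hγ' t htε) (g k.1)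
    have h2 : eval (γ t) (lieD v (g k.1)) = F t (u t) k := by
      have h3 : lieD v (g k.1) = g (k.1+1) := by
        simp only [hg]
        rw [Function.iterate_succ_apply']
      rw [h3, ← hc k]
      simp only [map_sum, map_mul, hFdef, hudef, hHdef, hΓdef, hclamp_id t htI]
    rw [h2] at h1
    exact h1
  have hzero' : ∀ t ∈ Set.Ioo (-δ) δ,
      HasDerivAt (fun _ : ℝ => (0 : Fin (m+1) → ℝ)) (F t 0) t := by
    intro t ht
    have hF0 : F t 0 = 0 := by funext k; simp [hFdef]
    rw [hF0]
    exact hasDerivAt_const _ _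
  have hu0 : u 0 = (fun _ : ℝ => (0 : Fin (m+1) → ℝ)) 0 := by
    funext k
    simp only [hudef, hγ0]
    exact hvan k.1
  have heqOn : Set.EqOn u (fun _ : ℝ => (0 : Fin (m+1) → ℝ)) (Set.Ioo (-δ) δ) :=
    ODE_solution_unique_of_mem_Ioo (s := fun _ => Set.univ)
      (fun t _ => (hlip t).lipschitzOnWith)
      ⟨neg_lt_zero.2 hδ0, hδ0⟩
      (fun t ht => ⟨hu' t ht, Set.mem_univ _⟩)
      (fun t ht => ⟨hzero' t ht, Set.mem_univ _⟩) hu0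
  filter_upwards [Ioo_mem_nhds (neg_lt_zero.2 hδ0) hδ0] with t ht
  have h4 := heqOn ht
  have h5 : eval (γ t) P = u t ⟨0, Nat.succ_pos m⟩ := by
    simp [hudef, hg]
  rw [h5, h4]
  rfl

abbrev Mon (n d : ℕ) := {s : Fin n →₀ ℕ // (s.sum fun _ e => e) ≤ d}

lemma apply_le_deg {n : ℕ} (s : Fin n →₀ ℕ) (i : Fin n) : s i ≤ s.sum fun _ e => e := by
  by_cases h : s i = 0
  · simp [h]
  · exact Finset.single_le_sum (f := fun j => s j) (fun _ _ => Nat.zero_le _)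
      (Finsupp.mem_support_iff.2 h)

instance (n d : ℕ) : Finite (Mon n d) := by
  have hinj : Function.Injective (fun s : Mon n d =>
      (fun i => (⟨s.1 i, Nat.lt_succ_of_le (le_trans (apply_le_deg s.1 i) s.2)⟩ : Fin (d+1)))) := by
    intro s₁ s₂ h
    apply Subtype.ext
    apply Finsupp.ext
    intro i
    exact congrArg Fin.val (congrFun h i)
  exact Finite.of_injective _ hinj

lemma sum_monomial_eq {n d : ℕ} [Fintype (Mon n d)] (Q : MvPolynomial (Fin n) ℝ)
    (hQ : Q.totalDegree ≤ d) :
    ∑ s : Mon n d, monomial s.1 (coeff s.1 Q) = Q := by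
  classical
  have hinj : Function.Injective (Subtype.val : Mon n d → (Fin n →₀ ℕ)) := Subtype.val_injective
  have him : ∑ s ∈ Finset.univ.image (Subtype.val : Mon n d → (Fin n →₀ ℕ)),
        (monomial s) (coeff s Q)
      = ∑ s : Mon n d, (monomial s.1) (coeff s.1 Q) :=
    Finset.sum_image (fun a _ b _ h => hinj h)
  rw [← him]
  refine Eq.trans (Finset.sum_subset ?_ ?_).symm (MvPolynomial.support_sum_monomial_coeff Q)
  · intro s hs
    refine Finset.mem_image.2 ⟨⟨s, le_trans (le_totalDegree hs) hQ⟩, Finset.mem_univ _, rfl⟩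
  · intro s _ hs
    rw [MvPolynomial.notMem_support_iff.1 hs, map_zero]

lemma exists_mu (n d : ℕ) :
    ∃ μ : ℕ, ∀ (v : Fin n → MvPolynomial (Fin n) ℝ) (P : MvPolynomial (Fin n) ℝ),
      (∀ i, (v i).totalDegree ≤ d) → P.totalDegree ≤ d →
      (∀ j ≤ μ, eval (0 : Fin n → ℝ) ((lieD v)^[j] P) = 0) →
      ∀ j, eval (0 : Fin n → ℝ) ((lieD v)^[j] P) = 0 := by
  classical
  haveI : Fintype (Mon n d) := Fintype.ofFinite _
  set R := MvPolynomial (Option (Fin n) × Mon n d) ℝ with hRdef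
  set genv : Fin n → MvPolynomial (Fin n) R :=
    fun i => ∑ s : Mon n d, C (X (some i, s)) * monomial s.1 1 with hgenv
  set genP : MvPolynomial (Fin n) R :=
    ∑ s : Mon n d, C (X (none, s)) * monomial s.1 1 with hgenP
  set f : ℕ → R := fun j => eval (0 : Fin n → R) ((lieD genv)^[j] genP) with hfdef
  have hmono : Monotone fun j => Ideal.span (f '' Set.Iic j) := fun a b hab =>
    Ideal.span_mono (Set.image_mono (Set.Iic_subset_Iic.2 hab))
  obtain ⟨μ, hμ⟩ := monotone_stabilizes_iff_noetherian.mpr inferInstance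
    ⟨fun j => Ideal.span (f '' Set.Iic j), hmono⟩
  refine ⟨μ, ?_⟩
  intro v P hv hP hvan j
  -- specialization map
  set cc : Option (Fin n) × Mon n d → ℝ := fun w =>
    Option.rec (coeff w.2.1 P) (fun i => coeff w.2.1 (v i)) w.1 with hccdef
  set φ : MvPolynomial (Fin n) R →+* MvPolynomial (Fin n) ℝ :=
    MvPolynomial.map (eval cc) with hφdef
  have hφP : φ genP = P := by
    rw [hgenP, map_sum]
    have hterm : ∀ s ∈ Finset.univ, φ (C (X (none, s)) * monomial s.1 1)
        = monomial s.1 (coeff s.1 P) := by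
      intro s _
      rw [hφdef, map_mul, MvPolynomial.map_C, MvPolynomial.map_monomial, eval_X, map_one,
        C_mul_monomial, mul_one]
    rw [Finset.sum_congr rfl hterm]
    exact sum_monomial_eq P hP
  have hφv : ∀ i, φ (genv i) = v i := by
    intro i
    rw [hgenv]
    simp only
    rw [map_sum]
    have hterm : ∀ s ∈ Finset.univ, φ (C (X (some i, s)) * monomial s.1 1)
        = monomial s.1 (coeff s.1 (v i)) := by
      intro s _
      rw [hφdef, map_mul, MvPolynomial.map_C, MvPolynomial.map_monomial, eval_X, map_one,
        C_mul_monomial, mul_one]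
    rw [Finset.sum_congr rfl hterm]
    exact sum_monomial_eq (v i) (hv i)
  have hiter : ∀ (k : ℕ) (Q : MvPolynomial (Fin n) R),
      φ ((lieD genv)^[k] Q) = (lieD v)^[k] (φ Q) := by
    intro k
    induction k with
    | zero => intro Q; simp
    | succ k ih =>
      intro Q
      rw [Function.iterate_succ_apply', Function.iterate_succ_apply', ← ih]
      rw [hφdef, lieD_map]
      congr 1
      funext i
      exact hφv i
  have heval0 : ∀ Q : MvPolynomial (Fin n) R,
      eval cc (eval (0 : Fin n → R) Q) = eval (0 : Fin n → ℝ) (φ Q) := by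
    have hhom : (eval cc).comp (eval (0 : Fin n → R))
        = (eval (0 : Fin n → ℝ)).comp φ := by
      apply MvPolynomial.ringHom_ext
      · intro r
        simp [hφdef]
      · intro i
        simp [hφdef]
    intro Q
    exact RingHom.congr_fun hhom Q
  have hfspec : ∀ k, eval cc (f k) = eval (0 : Fin n → ℝ) ((lieD v)^[k] P) := by
    intro k
    rw [hfdef]
    simp only
    rw [heval0, hiter, hφP]
  -- ideal argument
  have hker : Ideal.span (f '' Set.Iic μ) ≤ RingHom.ker (eval cc : R →+* ℝ) := by
    rw [Ideal.span_le]
    rintro x ⟨i, hi, rfl⟩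
    rw [SetLike.mem_coe, RingHom.mem_ker, hfspec]
    exact hvan i hi
  have hmem : f j ∈ Ideal.span (f '' Set.Iic μ) := by
    rcases le_or_gt j μ with h | h
    · exact Ideal.subset_span ⟨j, h, rfl⟩
    · have := hμ j h.le
      simp only [OrderHom.coe_mk] at this
      rw [this]
      exact Ideal.subset_span ⟨j, Set.mem_Iic.2 le_rfl, rfl⟩
  have := hker hmem
  rw [RingHom.mem_ker, hfspec] at this
  exact this


/-- **Gabrièlov–Khovanskii tangency bound (qualitative form).** For every
`n ≥ 1`, `d` there is `μ(n,d)` bounding the order of tangency at `0` between a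
trajectory of a polynomial vector field of degree `≤ d` nonvanishing at `0`
and an algebraic hypersurface `{P = 0}` of degree `≤ d` through `0`, whenever
the intersection is isolated. -/
theorem stmt7 (n d : ℕ) (hn : 1 ≤ n) :
    ∃ μ : ℕ, ∀ v : Fin n → MvPolynomial (Fin n) ℝ,
      (∀ i, (v i).totalDegree ≤ d) →
      (fun i => MvPolynomial.eval (0 : Fin n → ℝ) (v i)) ≠ 0 →
      ∀ P : MvPolynomial (Fin n) ℝ, Squarefree P → P.totalDegree ≤ d →
        MvPolynomial.eval (0 : Fin n → ℝ) P = 0 →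
      ∀ ε : ℝ, 0 < ε → ∀ γ : ℝ → (Fin n → ℝ), γ 0 = 0 →
        (∀ t ∈ Set.Ioo (-ε) ε,
          HasDerivAt γ (fun i => MvPolynomial.eval (γ t) (v i)) t) →
        ¬ (∀ᶠ t in nhds (0:ℝ), MvPolynomial.eval (γ t) P = 0) →
        ∃ j ≤ μ, iteratedDeriv j (fun t => MvPolynomial.eval (γ t) P) 0 ≠ 0 := by
  obtain ⟨μ, hμ⟩ := exists_mu n d
  refine ⟨μ, ?_⟩
  intro v hvdeg hv0 P hsq hPdeg hP0 ε hε γ hγ0 hγ' hne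
  by_contra hcon
  push_neg at hcon
  apply hne
  have hvan : ∀ j ≤ μ, eval (0 : Fin n → ℝ) ((lieD v)^[j] P) = 0 := by
    intro j hj
    have h1 := hcon j hj
    rw [iteratedDeriv_eval_comp v γ hε hγ' P j, hγ0] at h1
    exact h1
  exact eventually_zero_of_lie_vanish v P hε γ hγ0 hγ' (hμ v P hvdeg hPdeg hvan)
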